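/- Let f : ℝ → ℝ be C² with |f'(x)| ≤ B and f'' ∈ L^p(ℝ) for some p ∈ (1,∞). Then for every x, D_f[f''](x) := ∫_ℝ (f''(x)-f''(x-α))²/((f(x)-f(x-α))²+α²) dα ≥ |f''(x)|^{2+p} / (8^p ‖f''‖_{L^p}^p (1+B²)). -/

import Mathlib

open Real MeasureTheory
open scoped ENNReal

set_option maxHeartbeats 1000000 in
theorem stmt_10 (f : ℝ → ℝ) (B p : ℝ) (hB : 0 < B) (hp1 : 1 < p)
    (hf : ContDiff ℝ 2 f)
    (hf' : ∀ x, |deriv f x| ≤ B)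
    (hLp : MemLp (deriv (deriv f)) (ENNReal.ofReal p) volume) :
    ∀ x : ℝ,
      ENNReal.ofReal (|deriv (deriv f) x| ^ (2 + p) /
          ((8:ℝ) ^ p * (eLpNorm (deriv (deriv f)) (ENNReal.ofReal p) volume).toReal ^ p *
            (1 + B^2))) ≤
        ∫⁻ α : ℝ, ENNReal.ofReal
          ((deriv (deriv f) x - deriv (deriv f) (x - α))^2 /
            ((f x - f (x - α))^2 + α^2)) := by
  intro x
  have hp0 : (0:ℝ) < p := lt_trans one_pos hp1
  set g : ℝ → ℝ := deriv (deriv f) with hg_def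
  set c : ℝ := |g x| with hc_def
  set Nr : ℝ := (eLpNorm g (ENNReal.ofReal p) volume).toReal with hNr_def
  rcases eq_or_lt_of_le (abs_nonneg (g x)) with h0 | hc
  · rw [← hc_def] at h0
    rw [← h0, Real.zero_rpow (by positivity)]
    simp
  rcases eq_or_lt_of_le (ENNReal.toReal_nonneg (a := eLpNorm g (ENNReal.ofReal p) volume)) with hN0 | hN
  · rw [← hNr_def] at hN0
    rw [← hN0, Real.zero_rpow hp0.ne', mul_zero, zero_mul, div_zero]
    simp
  rw [← hNr_def] at hN
  rw [← hc_def] at hc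
  -- basic positivity
  have hcp : (0:ℝ) < c ^ p := Real.rpow_pos_of_pos hc p
  have hNp : (0:ℝ) < Nr ^ p := Real.rpow_pos_of_pos hN p
  have h8p : (0:ℝ) < (8:ℝ) ^ p := Real.rpow_pos_of_pos (by norm_num) p
  set r : ℝ := (8:ℝ) ^ p * Nr ^ p / c ^ p with hr_def
  have hr : 0 < r := by positivity
  have hB2 : (0:ℝ) < 1 + B ^ 2 := by positivity
  -- continuity of g
  have hf1 : ContDiff ℝ 1 (deriv f) := by
    have := (contDiff_succ_iff_deriv (n := 1)).mp (by exact_mod_cast hf)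
    exact this.2.2
  have hg_cont : Continuous g := hf1.continuous_deriv le_rfl
  clear_value g
  -- Lipschitz bound for f
  have hlip : ∀ a b : ℝ, |f a - f b| ≤ B * |a - b| := by
    have hd : Differentiable ℝ f := hf.differentiable (by norm_num)
    have hL : LipschitzWith B.toNNReal f := by
      apply lipschitzWith_of_nnnorm_deriv_le hd
      intro y
      rw [← NNReal.coe_le_coe, coe_nnnorm, Real.coe_toNNReal _ hB.le, Real.norm_eq_abs]
      exact hf' y
    intro a b
    have := hL.dist_le_mul a b
    rwa [Real.dist_eq, Real.dist_eq, Real.coe_toNNReal _ hB.le] at this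
  -- the good set
  set A : Set ℝ := Set.Icc (-(r/4)) (r/4) ∩ {α | |g (x - α)| ≤ c/2} with hA_def
  have hA_meas : MeasurableSet A := by
    have hm : Measurable fun α : ℝ => |g (x - α)| :=
      ((hg_cont.comp (continuous_const.sub continuous_id)).abs).measurable
    exact measurableSet_Icc.inter (hm measurableSet_Iic)
  -- measure of the bad set via Chebyshev
  set Bad : Set ℝ := {α : ℝ | ENNReal.ofReal (c/2) ≤ (‖g (x - α)‖₊ : ENNReal)} with hBad_def
  have hmp : MeasurePreserving (fun t : ℝ => x - t) volume volume :=
    Measure.measurePreserving_sub_left volume x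
  have hcomp_meas : AEStronglyMeasurable (fun α : ℝ => g (x - α)) volume :=
    (hg_cont.comp (continuous_const.sub continuous_id)).aestronglyMeasurable
  have heq : eLpNorm (fun α : ℝ => g (x - α)) (ENNReal.ofReal p) volume
      = eLpNorm g (ENNReal.ofReal p) volume :=
    eLpNorm_comp_measurePreserving hLp.1 hmp
  have hpt : (ENNReal.ofReal p).toReal = p := ENNReal.toReal_ofReal hp0.le
  have hNlt : eLpNorm g (ENNReal.ofReal p) volume ≠ ∞ := hLp.eLpNorm_lt_top.ne
  have hNofReal : eLpNorm g (ENNReal.ofReal p) volume = ENNReal.ofReal Nr := by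
    rw [hNr_def, ENNReal.ofReal_toReal hNlt]
  have hBad_le : volume Bad ≤ ENNReal.ofReal (r/4) := by
    have hcheb := meas_ge_le_mul_pow_eLpNorm_enorm volume
      (p := ENNReal.ofReal p) (by simp [ENNReal.ofReal_eq_zero, not_le, hp0])
      ENNReal.ofReal_ne_top hcomp_meas
      (ε := ENNReal.ofReal (c/2)) (by simp [ENNReal.ofReal_eq_zero, not_le]; linarith) (by simp)
    rw [heq, hpt, hNofReal] at hcheb
    refine le_trans hcheb ?_
    rw [← ENNReal.ofReal_inv_of_pos (by linarith),
      ENNReal.ofReal_rpow_of_pos (by positivity),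
      ENNReal.ofReal_rpow_of_pos hN, ← ENNReal.ofReal_mul (by positivity)]
    apply ENNReal.ofReal_le_ofReal
    have h1 : ((c/2)⁻¹) ^ p = 2 ^ p / c ^ p := by
      rw [show ((c/2)⁻¹ : ℝ) = 2 / c from inv_div c 2 ▸ rfl,
        Real.div_rpow (by norm_num) (by positivity)]
    rw [h1, hr_def]
    have h8 : (8:ℝ) ^ p = 2 ^ p * 4 ^ p := by
      rw [← Real.mul_rpow (by norm_num) (by norm_num)]; norm_num
    have h4 : (4:ℝ) ≤ 4 ^ p := by
      calc (4:ℝ) = 4 ^ (1:ℝ) := by norm_num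
      _ ≤ 4 ^ p := Real.rpow_le_rpow_of_exponent_le (by norm_num) hp1.le
    rw [div_mul_eq_mul_div, div_div, div_le_div_iff₀ (by positivity) (by positivity)]
    calc 2 ^ p * Nr ^ p * (c ^ p * 4) = 2 ^ p * 4 * Nr ^ p * c ^ p := by ring
      _ ≤ 2 ^ p * 4 ^ p * Nr ^ p * c ^ p :=
          mul_le_mul_of_nonneg_right (mul_le_mul_of_nonneg_right
            (mul_le_mul_of_nonneg_left h4 (by positivity)) hNp.le) hcp.le
      _ = 8 ^ p * Nr ^ p * c ^ p := by rw [← h8]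
  -- Icc ⊆ A ∪ Bad
  have hsub : Set.Icc (-(r/4)) (r/4) ⊆ A ∪ Bad := by
    intro α hα
    by_cases h : |g (x - α)| ≤ c/2
    · exact Or.inl ⟨hα, h⟩
    · right
      rw [hBad_def]
      have : ENNReal.ofReal (c/2) ≤ ENNReal.ofReal ‖g (x - α)‖ := by
        apply ENNReal.ofReal_le_ofReal
        rw [Real.norm_eq_abs]; linarith [not_le.mp h]
      rwa [ofReal_norm] at this
  -- measure of A
  have hμA : ENNReal.ofReal (r/4) ≤ volume A := by
    have hIcc : volume (Set.Icc (-(r/4)) (r/4)) = ENNReal.ofReal (r/2) := by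
      rw [Real.volume_Icc]; congr 1; ring
    have h1 : ENNReal.ofReal (r/2) ≤ volume A + volume Bad := by
      rw [← hIcc]
      exact le_trans (measure_mono hsub) (measure_union_le _ _)
    have h2 : ENNReal.ofReal (r/2) ≤ volume A + ENNReal.ofReal (r/4) :=
      le_trans h1 (add_le_add_right hBad_le _)
    have h3 : ENNReal.ofReal (r/4) + ENNReal.ofReal (r/4) = ENNReal.ofReal (r/2) := by
      rw [← ENNReal.ofReal_add (by positivity) (by positivity)]; congr 1; ring
    rw [← h3] at h2
    exact (ENNReal.add_le_add_iff_right ENNReal.ofReal_ne_top).mp h2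
  -- pointwise bound on A
  set K : ℝ := (c/2)^2 / ((1 + B^2) * (r/4)^2) with hK_def
  have hKpos : 0 < K := by positivity
  have hpointwise : ∀ α ∈ A, ENNReal.ofReal K ≤
      ENNReal.ofReal ((g x - g (x - α))^2 / ((f x - f (x - α))^2 + α^2)) := by
    intro α hα
    obtain ⟨hα1, hα2⟩ := hα
    simp only [Set.mem_setOf_eq] at hα2
    have hαabs : |α| ≤ r/4 := abs_le.mpr ⟨by linarith [hα1.1], hα1.2⟩
    have hα0 : α ≠ 0 := by
      intro h
      rw [h, sub_zero, ← hc_def] at hα2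
      linarith
    apply ENNReal.ofReal_le_ofReal
    have hnum : (c/2)^2 ≤ (g x - g (x - α))^2 := by
      have h1 : c/2 ≤ |g x - g (x - α)| := by
        have := abs_sub_abs_le_abs_sub (g x) (g (x - α))
        rw [← hc_def] at this
        linarith
      calc (c/2)^2 ≤ |g x - g (x - α)|^2 := by
            apply pow_le_pow_left₀ (by linarith) h1
      _ = (g x - g (x - α))^2 := sq_abs _
    have hden_pos : 0 < (f x - f (x - α))^2 + α^2 := by positivity
    have hden : (f x - f (x - α))^2 + α^2 ≤ (1 + B^2) * (r/4)^2 := by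
      have h1 : (f x - f (x - α))^2 ≤ B^2 * α^2 := by
        have := hlip x (x - α)
        have h2 : |x - (x - α)| = |α| := by congr 1; ring
        rw [h2] at this
        calc (f x - f (x - α))^2 = |f x - f (x - α)|^2 := (sq_abs _).symm
        _ ≤ (B * |α|)^2 := by
            apply pow_le_pow_left₀ (abs_nonneg _) this
        _ = B^2 * α^2 := by rw [mul_pow, sq_abs]
      have h2 : α^2 ≤ (r/4)^2 := by
        calc α^2 = |α|^2 := (sq_abs _).symm
        _ ≤ (r/4)^2 := pow_le_pow_left₀ (abs_nonneg _) hαabs 2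
      nlinarith [sq_nonneg α, sq_nonneg B, hB.le]
    rw [hK_def]
    exact div_le_div₀ (by positivity) hnum hden_pos hden
  -- key arithmetic identity
  have hkey : c ^ (2 + p) / ((8:ℝ) ^ p * Nr ^ p * (1 + B^2)) = K * (r/4) := by
    have hc2 : c ^ (2 + p) = c ^ (2:ℕ) * c ^ p := by
      rw [show (2:ℝ) + p = ((2:ℕ):ℝ) + p by norm_num, Real.rpow_add hc,
        Real.rpow_natCast]
    rw [hc2, hK_def, hr_def]
    field_simp
    ring
  rw [hkey, ENNReal.ofReal_mul hKpos.le]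
  calc ENNReal.ofReal K * ENNReal.ofReal (r/4)
      ≤ ENNReal.ofReal K * volume A := by gcongr
    _ = ∫⁻ _ in A, ENNReal.ofReal K := (setLIntegral_const A _).symm
    _ ≤ ∫⁻ α in A, ENNReal.ofReal
          ((g x - g (x - α))^2 / ((f x - f (x - α))^2 + α^2)) :=
        setLIntegral_mono' hA_meas hpointwise
    _ ≤ ∫⁻ α : ℝ, ENNReal.ofReal
          ((g x - g (x - α))^2 / ((f x - f (x - α))^2 + α^2)) :=
        setLIntegral_le_lintegral _ _
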